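/- Corollary 3.3, large step size: Under the stated setting with residual polynomial P = (1 - (2/(L+ℓ))·X)^t (gradient descent with step size h = 2/(L+ℓ)) and integer t ≥ 1, writing κ = ℓ/L, one has ‖deriv xₜ θ - deriv x⋆ θ‖ ≤ ((1-κ)/(1+κ))^(t-1) · ((2t-1) · ‖deriv x₀ θ - deriv x⋆ θ‖ + (2t/(L+ℓ))·G). -/

import Mathlib

open Polynomial Matrix

attribute [local instance] Matrix.normedAddCommGroup Matrix.normedSpace

/-- The Euclidean norm on `Fin d → ℝ`. -/
noncomputable def euclNorm {d : ℕ} (v : Fin d → ℝ) : ℝ := Real.sqrt (∑ i, v i ^ 2)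

section aux
variable {d : ℕ}

lemma euclNorm_eq_norm (v : Fin d → ℝ) :
    euclNorm v = ‖(WithLp.equiv 2 (Fin d → ℝ)).symm v‖ := by
  rw [EuclideanSpace.norm_eq]
  simp [euclNorm, sq_abs]

lemma euclNorm_nonneg (v : Fin d → ℝ) : 0 ≤ euclNorm v := Real.sqrt_nonneg _

lemma euclNorm_zero : euclNorm (0 : Fin d → ℝ) = 0 := by simp [euclNorm]

lemma euclNorm_add_le (v w : Fin d → ℝ) :
    euclNorm (v + w) ≤ euclNorm v + euclNorm w := by
  simp only [euclNorm_eq_norm]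
  rw [show (WithLp.equiv 2 (Fin d → ℝ)).symm (v + w)
      = (WithLp.equiv 2 (Fin d → ℝ)).symm v + (WithLp.equiv 2 (Fin d → ℝ)).symm w from rfl]
  exact norm_add_le _ _

lemma euclNorm_smul (a : ℝ) (v : Fin d → ℝ) :
    euclNorm (a • v) = |a| * euclNorm v := by
  simp only [euclNorm_eq_norm]
  rw [show (WithLp.equiv 2 (Fin d → ℝ)).symm (a • v)
      = a • (WithLp.equiv 2 (Fin d → ℝ)).symm v from rfl]
  rw [norm_smul]; simp [Real.norm_eq_abs]

lemma euclNorm_neg (w : Fin d → ℝ) : euclNorm (-w) = euclNorm w := by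
  simp [euclNorm, Pi.neg_apply, neg_sq]

lemma euclNorm_sub_le (v w : Fin d → ℝ) :
    euclNorm (v - w) ≤ euclNorm v + euclNorm w := by
  have h := euclNorm_add_le v (-w)
  rw [euclNorm_neg] at h
  simpa [sub_eq_add_neg] using h

lemma euclNorm_eq_sqrt_dot (v : Fin d → ℝ) : euclNorm v = Real.sqrt (v ⬝ᵥ v) := by
  simp [euclNorm, dotProduct, sq]


lemma posSemidef_smul_nonneg {A : Matrix (Fin d) (Fin d) ℝ} {a : ℝ}
    (hA : A.PosSemidef) (ha : 0 ≤ a) : (a • A).PosSemidef := by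
  refine Matrix.PosSemidef.of_dotProduct_mulVec_nonneg ?_ (fun x => ?_)
  · unfold Matrix.IsHermitian
    rw [conjTranspose_smul, hA.isHermitian.eq]
    simp
  · have h0 := hA.dotProduct_mulVec_nonneg x
    calc (0:ℝ) ≤ a * (star x ⬝ᵥ A.mulVec x) := mul_nonneg ha h0
    _ = star x ⬝ᵥ (a • A).mulVec x := by
        rw [smul_mulVec, dotProduct_smul]; simp

lemma opBound {A : Matrix (Fin d) (Fin d) ℝ} {c : ℝ} (hc : 0 ≤ c)
    (hA : A.IsHermitian)
    (h1 : (c • (1 : Matrix (Fin d) (Fin d) ℝ) - A).PosSemidef)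
    (h2 : (A + c • (1 : Matrix (Fin d) (Fin d) ℝ)).PosSemidef)
    (v : Fin d → ℝ) : euclNorm (A.mulVec v) ≤ c * euclNorm v := by
  set P := c • (1 : Matrix (Fin d) (Fin d) ℝ) - A with hP
  set Q := A + c • (1 : Matrix (Fin d) (Fin d) ℝ) with hQ
  rcases eq_or_lt_of_le hc with hc0 | hcpos
  · -- c = 0 : A = -P and P *ᵥ v = 0
    have hPQ : Q = -P := by rw [hP, hQ, ← hc0]; simp
    have hsz : ∀ x : Fin d → ℝ, star x ⬝ᵥ P.mulVec x = 0 := by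
      intro x
      have a1 := h1.dotProduct_mulVec_nonneg x
      have a2 := h2.dotProduct_mulVec_nonneg x
      rw [hPQ] at a2
      simp only [neg_mulVec, dotProduct_neg] at a2
      linarith
    have hPv : P.mulVec v = 0 := (h1.dotProduct_mulVec_zero_iff v).mp (hsz v)
    have hAv : A.mulVec v = 0 := by
      have : A = -P := by rw [hP, ← hc0]; simp
      rw [this, neg_mulVec, hPv, neg_zero]
    rw [hAv, euclNorm_zero, ← hc0, zero_mul]
  · -- c > 0
    have hPQprod : P * Q = c ^ 2 • (1 : Matrix (Fin d) (Fin d) ℝ) - A * A := by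
      rw [hP, hQ]
      rw [pow_two]
      simp only [sub_mul, mul_add, smul_mul_assoc, mul_smul_comm, one_mul, mul_one]
      module
    have hQPprod : Q * P = c ^ 2 • (1 : Matrix (Fin d) (Fin d) ℝ) - A * A := by
      rw [hP, hQ, pow_two]
      simp only [add_mul, mul_sub, smul_mul_assoc, mul_smul_comm, one_mul, mul_one]
      module
    have key : (c ^ 2 • (1 : Matrix (Fin d) (Fin d) ℝ) - A * A).PosSemidef := by
      have e1 : (Q * P * Qᴴ).PosSemidef := h1.mul_mul_conjTranspose_same Q
      have e2 : (P * Q * Pᴴ).PosSemidef := h2.mul_mul_conjTranspose_same P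
      rw [h2.isHermitian.eq] at e1
      rw [h1.isHermitian.eq] at e2
      have hsum := e1.add e2
      have heq : Q * P * Q + P * Q * P
          = (2 * c) • (c ^ 2 • (1 : Matrix (Fin d) (Fin d) ℝ) - A * A) := by
        rw [hQPprod, hPQprod, ← mul_add]
        have hQP1 : Q + P = (2 * c) • (1 : Matrix (Fin d) (Fin d) ℝ) := by
          rw [hP, hQ]; module
        rw [hQP1, mul_smul_comm, mul_one]
      rw [heq] at hsum
      have := posSemidef_smul_nonneg hsum (a := (2 * c)⁻¹) (by positivity)
      rwa [smul_smul, inv_mul_cancel₀ (by positivity), one_smul] at this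
    -- quadratic form inequality
    have hquad := key.dotProduct_mulVec_nonneg v
    have hAT : Aᵀ = A := by
      ext i j
      have := congrFun (congrFun hA.eq i) j
      simpa [Matrix.conjTranspose_apply] using this
    have hAv2 : (A.mulVec v) ⬝ᵥ (A.mulVec v) = v ⬝ᵥ ((A * A).mulVec v) := by
      rw [Matrix.dotProduct_mulVec (A.mulVec v), ← Matrix.mulVec_transpose, hAT,
        Matrix.mulVec_mulVec, dotProduct_comm]
    have hquad' : v ⬝ᵥ ((A * A).mulVec v) ≤ c ^ 2 * (v ⬝ᵥ v) := by
      have hsv : (c ^ 2 • (1 : Matrix (Fin d) (Fin d) ℝ) - A * A).mulVec v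
          = c ^ 2 • v - (A * A).mulVec v := by
        rw [Matrix.sub_mulVec, smul_mulVec, one_mulVec]
      rw [show (star v : Fin d → ℝ) = v from funext fun i => star_trivial _, hsv,
        dotProduct_sub, dotProduct_smul] at hquad
      have : (0:ℝ) ≤ c ^ 2 * (v ⬝ᵥ v) - v ⬝ᵥ ((A * A).mulVec v) := by
        simpa [smul_eq_mul] using hquad
      linarith
    have hnn : (0:ℝ) ≤ v ⬝ᵥ v := by
      have : (0:ℝ) ≤ ∑ i, v i * v i := Finset.sum_nonneg fun i _ => mul_self_nonneg _
      simpa [dotProduct] using this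
    rw [euclNorm_eq_sqrt_dot, euclNorm_eq_sqrt_dot]
    calc Real.sqrt ((A.mulVec v) ⬝ᵥ (A.mulVec v))
        ≤ Real.sqrt (c ^ 2 * (v ⬝ᵥ v)) := by
          apply Real.sqrt_le_sqrt
          rw [hAv2]; exact hquad'
      _ = c * Real.sqrt (v ⬝ᵥ v) := by
          rw [Real.sqrt_mul (sq_nonneg c), Real.sqrt_sq hc]

end aux

section calcaux
variable {d : ℕ}

lemma hasDerivAt_bilin {M N Pp : Type*} [NormedAddCommGroup M] [NormedSpace ℝ M]
    [NormedAddCommGroup N] [NormedSpace ℝ N] [NormedAddCommGroup Pp] [NormedSpace ℝ Pp]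
    [FiniteDimensional ℝ M] [FiniteDimensional ℝ N]
    (B : M →ₗ[ℝ] N →ₗ[ℝ] Pp) {f : ℝ → M} {g : ℝ → N} {f' : M} {g' : N} {x : ℝ}
    (hf : HasDerivAt f f' x) (hg : HasDerivAt g g' x) :
    HasDerivAt (fun y => B (f y) (g y)) (B f' (g x) + B (f x) g') x := by
  let B₁ : M →ₗ[ℝ] (N →L[ℝ] Pp) :=
    { toFun := fun m => LinearMap.toContinuousLinearMap (B m)
      map_add' := fun a b => by ext n; simp
      map_smul' := fun a b => by ext n; simp }
  let B₂ : M →L[ℝ] (N →L[ℝ] Pp) := LinearMap.toContinuousLinearMap B₁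
  have h1 : HasDerivAt (fun y => B₂ (f y)) (B₂ f') x :=
    B₂.hasFDerivAt.comp_hasDerivAt x hf
  have h2 := h1.clm_apply hg
  exact h2

noncomputable def mulVecB (d : ℕ) :
    Matrix (Fin d) (Fin d) ℝ →ₗ[ℝ] (Fin d → ℝ) →ₗ[ℝ] (Fin d → ℝ) where
  toFun A := A.mulVecLin
  map_add' A B := by ext v; simp [Matrix.add_mulVec]
  map_smul' a A := by ext v; simp [Matrix.smul_mulVec]

lemma HasDerivAt.matMul {f g : ℝ → Matrix (Fin d) (Fin d) ℝ}
    {f' g' : Matrix (Fin d) (Fin d) ℝ} {x : ℝ}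
    (hf : HasDerivAt f f' x) (hg : HasDerivAt g g' x) :
    HasDerivAt (fun y => f y * g y) (f' * g x + f x * g') x := by
  have := hasDerivAt_bilin (LinearMap.mul ℝ (Matrix (Fin d) (Fin d) ℝ)) hf hg
  simp at this; exact this

lemma HasDerivAt.matVec {f : ℝ → Matrix (Fin d) (Fin d) ℝ} {g : ℝ → Fin d → ℝ}
    {f' : Matrix (Fin d) (Fin d) ℝ} {g' : Fin d → ℝ} {x : ℝ}
    (hf : HasDerivAt f f' x) (hg : HasDerivAt g g' x) :
    HasDerivAt (fun y => (f y).mulVec (g y)) (f'.mulVec (g x) + (f x).mulVec g') x := by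
  have := hasDerivAt_bilin (mulVecB d) hf hg
  simpa [mulVecB, Matrix.mulVecLin_apply] using this

lemma hasDerivAt_matPow {M : ℝ → Matrix (Fin d) (Fin d) ℝ}
    {M₁ : Matrix (Fin d) (Fin d) ℝ} {x : ℝ}
    (hM : HasDerivAt M M₁ x) (hc : Commute (M x) M₁) (k : ℕ) :
    HasDerivAt (fun y => (M y) ^ (k + 1)) (((k : ℝ) + 1) • ((M x) ^ k * M₁)) x := by
  induction k with
  | zero => simpa using hM
  | succ k ih =>
    have h2 : HasDerivAt (fun y => (M y) ^ (k + 1) * (M y))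
        ((((k : ℝ) + 1) • ((M x) ^ k * M₁)) * M x + (M x) ^ (k + 1) * M₁) x := ih.matMul hM
    have heq : (fun y => (M y) ^ (k + 1) * (M y)) = fun y => (M y) ^ (k + 1 + 1) := by
      funext y; rw [← pow_succ]
    rw [heq] at h2
    convert h2 using 1
    have hassoc : (M x) ^ k * M₁ * (M x) = (M x) ^ (k + 1) * M₁ := by
      rw [mul_assoc, ← hc.eq, ← mul_assoc, ← pow_succ]
    rw [smul_mul_assoc, hassoc]
    push_cast
    rw [add_smul, one_smul]

lemma differentiableAt_entry {M : ℝ → Matrix (Fin d) (Fin d) ℝ} {x : ℝ}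
    (h : DifferentiableAt ℝ M x) (i j : Fin d) :
    DifferentiableAt ℝ (fun y => M y i j) x := by
  have h1 : DifferentiableAt ℝ (fun y => M y i) x := differentiableAt_pi.mp h i
  exact differentiableAt_pi.mp h1 j

lemma differentiableAt_matrix_of_entries {M : ℝ → Matrix (Fin d) (Fin d) ℝ} {x : ℝ}
    (h : ∀ i j, DifferentiableAt ℝ (fun y => M y i j) x) : DifferentiableAt ℝ M x :=
  differentiableAt_pi.mpr fun i => differentiableAt_pi.mpr fun j => h i j

lemma differentiableAt_det {M : ℝ → Matrix (Fin d) (Fin d) ℝ} {x : ℝ}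
    (h : ∀ i j, DifferentiableAt ℝ (fun y => M y i j) x) :
    DifferentiableAt ℝ (fun y => (M y).det) x := by
  simp only [Matrix.det_apply']
  apply DifferentiableAt.fun_sum
  intro σ _
  exact (DifferentiableAt.fun_finsetProd (fun i _ => h (σ i) i)).const_mul _

lemma differentiableAt_adjugate {M : ℝ → Matrix (Fin d) (Fin d) ℝ} {x : ℝ}
    (h : DifferentiableAt ℝ M x) :
    DifferentiableAt ℝ (fun y => (M y).adjugate) x := by
  apply differentiableAt_matrix_of_entries
  intro i j
  simp only [Matrix.adjugate_apply]
  apply differentiableAt_det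
  intro a bb
  by_cases hh : a = j
  · simp only [Matrix.updateRow_apply, if_pos hh]
    exact differentiableAt_const _
  · simp only [Matrix.updateRow_apply, if_neg hh]
    exact differentiableAt_entry h a bb

lemma differentiableAt_inv_matrix {M : ℝ → Matrix (Fin d) (Fin d) ℝ} {x : ℝ}
    (h : DifferentiableAt ℝ M x) (hdet : (M x).det ≠ 0) :
    DifferentiableAt ℝ (fun y => (M y)⁻¹) x := by
  have heq : (fun y => (M y)⁻¹) = fun y => ((M y).det)⁻¹ • (M y).adjugate := by
    funext y
    rw [Matrix.inv_def, Ring.inverse_eq_inv']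
  rw [heq]
  exact ((differentiableAt_det (fun i j => differentiableAt_entry h i j)).inv hdet).smul
    (differentiableAt_adjugate h)

end calcaux
/-- Corollary 3.3, large step size `h = 2/(L+ℓ)`. -/
theorem jacobian_rate_gd_large_step {d : ℕ} (hd : 1 ≤ d) (θ : ℝ)
    (H : ℝ → Matrix (Fin d) (Fin d) ℝ) (b x₀ : ℝ → (Fin d → ℝ))
    (hH : DifferentiableAt ℝ H θ) (hb : DifferentiableAt ℝ b θ)
    (hx₀ : DifferentiableAt ℝ x₀ θ)
    (ℓ L : ℝ) (hℓ : 0 < ℓ) (hℓL : ℓ ≤ L)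
    (hsym : (H θ).IsSymm)
    (hlower : (H θ - ℓ • 1).PosSemidef) (hupper : (L • 1 - H θ).PosSemidef)
    (hcomm : H θ * deriv H θ = deriv H θ * H θ)
    (t : ℕ) (ht : 1 ≤ t)
    (P : Polynomial ℝ) (hP : P = (1 - Polynomial.C (2 / (L + ℓ)) * Polynomial.X) ^ t)
    (xstar : ℝ → (Fin d → ℝ))
    (hxstar : ∀ θ' : ℝ, xstar θ' = -((H θ')⁻¹.mulVec (b θ')))
    (xt : ℝ → (Fin d → ℝ))
    (hxt : ∀ θ' : ℝ, xt θ' =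
      xstar θ' + ((Polynomial.aeval (H θ')) P).mulVec (x₀ θ' - xstar θ'))
    (G : ℝ)
    (hG : G = euclNorm ((deriv H θ).mulVec (x₀ θ) + (H θ).mulVec (deriv x₀ θ) + deriv b θ))
    (κ : ℝ) (hκ : κ = ℓ / L) :
    euclNorm (deriv xt θ - deriv xstar θ) ≤
      ((1 - κ) / (1 + κ)) ^ (t - 1) *
        ((2 * (t : ℝ) - 1) * euclNorm (deriv x₀ θ - deriv xstar θ)
          + (2 * (t : ℝ) / (L + ℓ)) * G) := by
  have hL : 0 < L := lt_of_lt_of_le hℓ hℓL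
  have hLl : 0 < L + ℓ := by linarith
  have hLlne : L + ℓ ≠ 0 := ne_of_gt hLl
  set A := H θ with hAdef
  set A' := deriv H θ with hA'def
  set g : Fin d → ℝ := A'.mulVec (x₀ θ) + A.mulVec (deriv x₀ θ) + deriv b θ with hgdef
  set st : ℝ := 2 / (L + ℓ) with hst
  have hstpos : 0 < st := by rw [hst]; positivity
  set ρ : ℝ := (L - ℓ) / (L + ℓ) with hρ
  have hρnn : 0 ≤ ρ := by rw [hρ]; exact div_nonneg (by linarith) hLl.le
  -- basic matrix facts
  have hAherm : A.IsHermitian := by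
    unfold Matrix.IsHermitian
    ext i j
    rw [Matrix.conjTranspose_apply, star_trivial]
    exact congrFun (congrFun hsym i) j
  have hApsd : A.PosSemidef := by
    have h2 := hlower.add (posSemidef_smul_nonneg Matrix.PosSemidef.one hℓ.le)
    rwa [sub_add_cancel] at h2
  have hposdef : A.PosDef := by
    refine Matrix.PosDef.of_dotProduct_mulVec_pos hAherm (fun x hx => ?_)
    have h1 := hlower.dotProduct_mulVec_nonneg x
    have hsplit : A.mulVec x = (A - ℓ • 1).mulVec x + ℓ • x := by
      rw [Matrix.sub_mulVec, smul_mulVec, one_mulVec]; abel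
    rw [hsplit, dotProduct_add]
    have h2 : (0:ℝ) < star x ⬝ᵥ ℓ • x := by
      rw [dotProduct_smul]
      exact smul_pos hℓ (dotProduct_star_self_pos_iff.mpr hx)
    exact add_pos_of_nonneg_of_pos h1 h2
  have hdetne : A.det ≠ 0 := ne_of_gt hposdef.det_pos
  -- differentiability of xstar
  have hInv : DifferentiableAt ℝ (fun y => (H y)⁻¹) θ := differentiableAt_inv_matrix hH hdetne
  have hxstarDiff : DifferentiableAt ℝ xstar θ := by
    have hfe : xstar = fun y => -((H y)⁻¹.mulVec (b y)) := funext hxstar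
    rw [hfe]
    exact ((hInv.hasDerivAt.matVec hb.hasDerivAt).neg).differentiableAt
  set s : Fin d → ℝ := deriv xstar θ with hsdef
  have hxstarHD : HasDerivAt xstar s θ := hxstarDiff.hasDerivAt
  -- the key derivative identity for xstar
  have hyHD : HasDerivAt (fun y => (H y).mulVec (xstar y) + b y)
      (A'.mulVec (xstar θ) + A.mulVec s + deriv b θ) θ := by
    exact (hH.hasDerivAt.matVec hxstarHD).add hb.hasDerivAt
  have hdetcont : ContinuousAt (fun y => (H y).det) θ :=
    (differentiableAt_det (fun i j => differentiableAt_entry hH i j)).continuousAt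
  have hev : (fun y => (H y).mulVec (xstar y) + b y) =ᶠ[nhds θ] fun _ => (0 : Fin d → ℝ) := by
    filter_upwards [hdetcont.eventually_ne hdetne] with y hy0
    rw [hxstar y, Matrix.mulVec_neg, Matrix.mulVec_mulVec,
      Matrix.mul_nonsing_inv _ (isUnit_iff_ne_zero.mpr hy0), one_mulVec]
    simp
  have hyzero : HasDerivAt (fun y => (H y).mulVec (xstar y) + b y) 0 θ :=
    (hasDerivAt_const θ (0 : Fin d → ℝ)).congr_of_eventuallyEq hev
  have hkey : A'.mulVec (xstar θ) + A.mulVec s + deriv b θ = 0 := hyHD.unique hyzero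
  -- the iteration matrix
  set Mf : ℝ → Matrix (Fin d) (Fin d) ℝ := fun y => 1 - st • H y with hMf
  set M₁ : Matrix (Fin d) (Fin d) ℝ := -(st • A') with hM₁
  have hMHD : HasDerivAt Mf M₁ θ := by
    have h1 : HasDerivAt (fun y => st • H y) (st • A') θ := hH.hasDerivAt.const_smul st
    have h2 := (hasDerivAt_const θ (1 : Matrix (Fin d) (Fin d) ℝ)).sub h1
    simp at h2; exact h2
  have hcomm2 : Commute (Mf θ) M₁ := by
    show (1 - st • A) * (-(st • A')) = (-(st • A')) * (1 - st • A)
    simp only [mul_neg, neg_mul, neg_inj, mul_sub, sub_mul, mul_one, one_mul,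
      smul_mul_assoc, mul_smul_comm, smul_smul]
    rw [hcomm]
    module
  obtain ⟨m, rfl⟩ : ∃ m, t = m + 1 := ⟨t - 1, (Nat.succ_pred_eq_of_pos ht).symm⟩
  have hPev : ∀ y, (Polynomial.aeval (H y)) P = (Mf y) ^ (m + 1) := by
    intro y
    rw [hP, map_pow, map_sub, _root_.map_one, _root_.map_mul, aeval_C, aeval_X]
    show (1 - algebraMap ℝ (Matrix (Fin d) (Fin d) ℝ) st * H y) ^ (m+1) = (1 - st • H y) ^ (m+1)
    rw [Algebra.algebraMap_eq_smul_one, smul_mul_assoc, one_mul]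
  set N : Matrix (Fin d) (Fin d) ℝ := (Mf θ) ^ m with hN
  have hpowHD : HasDerivAt (fun y => (Mf y) ^ (m + 1)) (((m : ℝ) + 1) • (N * M₁)) θ :=
    hasDerivAt_matPow hMHD hcomm2 m
  set r' : Fin d → ℝ := deriv x₀ θ - s with hr'
  have hrHD : HasDerivAt (fun y => x₀ y - xstar y) r' θ := hx₀.hasDerivAt.sub hxstarHD
  set D : Fin d → ℝ :=
    (((m : ℝ) + 1) • (N * M₁)).mulVec (x₀ θ - xstar θ) + ((Mf θ) ^ (m + 1)).mulVec r'
    with hDdef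
  have hFHD : HasDerivAt (fun y => ((Mf y) ^ (m + 1)).mulVec (x₀ y - xstar y)) D θ :=
    hpowHD.matVec hrHD
  have hxteq : xt = fun y => xstar y + ((Mf y) ^ (m + 1)).mulVec (x₀ y - xstar y) := by
    funext y
    rw [hxt y, hPev y]
  have hxtHD : HasDerivAt xt (s + D) θ := by
    rw [hxteq]
    exact hxstarHD.add hFHD
  have hgoalvec : deriv xt θ - deriv xstar θ = D := by
    rw [hxtHD.deriv, ← hsdef]
    abel
  rw [hgoalvec]
  -- key algebraic identity
  have hkey2 : A'.mulVec (x₀ θ - xstar θ) = g - A.mulVec r' := by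
    have hAs : A.mulVec s = -(A'.mulVec (xstar θ)) - deriv b θ := by
      have h3 : A.mulVec s =
          (A'.mulVec (xstar θ) + A.mulVec s + deriv b θ) - A'.mulVec (xstar θ) - deriv b θ := by
        abel
      rw [h3, hkey]
      abel
    rw [Matrix.mulVec_sub, hgdef, hr', Matrix.mulVec_sub, hAs]
    abel
  set B2 : Matrix (Fin d) (Fin d) ℝ := 1 + ((m : ℝ) * st) • A with hB2
  set u : Fin d → ℝ := B2.mulVec r' - (((m : ℝ) + 1) * st) • g with hu
  have hDeq : D = N.mulVec u := by
    have e1 : (((m : ℝ) + 1) • (N * M₁)).mulVec (x₀ θ - xstar θ)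
        = ((m : ℝ) + 1) • (N.mulVec (M₁.mulVec (x₀ θ - xstar θ))) := by
      rw [smul_mulVec, ← Matrix.mulVec_mulVec]
    have e2 : M₁.mulVec (x₀ θ - xstar θ) = -(st • (g - A.mulVec r')) := by
      rw [hM₁, Matrix.neg_mulVec, smul_mulVec, hkey2]
    have hMr : (Mf θ).mulVec r' = r' - st • (A.mulVec r') := by
      show (1 - st • A).mulVec r' = r' - st • A.mulVec r'
      rw [Matrix.sub_mulVec, Matrix.one_mulVec, smul_mulVec]
    have e3 : ((Mf θ) ^ (m + 1)).mulVec r' = N.mulVec (r' - st • (A.mulVec r')) := by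
      rw [pow_succ, ← Matrix.mulVec_mulVec, hMr, ← hN]
    rw [hDdef, e1, e2, e3, ← Matrix.mulVec_smul, ← Matrix.mulVec_add]
    refine congrArg N.mulVec ?_
    rw [hu, hB2, Matrix.add_mulVec, Matrix.one_mulVec, smul_mulVec]
    module
  rw [hDeq]
  -- spectral bounds
  have hMherm : (Mf θ).IsHermitian := by
    show ((1 - st • A) : Matrix (Fin d) (Fin d) ℝ).IsHermitian
    unfold Matrix.IsHermitian
    rw [conjTranspose_sub, conjTranspose_one, conjTranspose_smul, hAherm.eq, star_trivial]
  have psd1 : (ρ • (1 : Matrix (Fin d) (Fin d) ℝ) - Mf θ).PosSemidef := by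
    have hc1 : ρ • (1 : Matrix (Fin d) (Fin d) ℝ) - Mf θ = st • (A - ℓ • 1) := by
      show ρ • (1 : Matrix (Fin d) (Fin d) ℝ) - (1 - st • A) = st • (A - ℓ • 1)
      rw [smul_sub, smul_smul]
      have hs1 : st * ℓ = 1 - ρ := by rw [hst, hρ]; field_simp; ring
      rw [hs1, sub_smul, one_smul]
      abel
    rw [hc1]
    exact posSemidef_smul_nonneg hlower hstpos.le
  have psd2 : (Mf θ + ρ • (1 : Matrix (Fin d) (Fin d) ℝ)).PosSemidef := by
    have hc2 : Mf θ + ρ • (1 : Matrix (Fin d) (Fin d) ℝ) = st • (L • 1 - A) := by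
      show (1 - st • A) + ρ • (1 : Matrix (Fin d) (Fin d) ℝ) = st • (L • 1 - A)
      rw [smul_sub, smul_smul]
      have hs2 : st * L = 1 + ρ := by rw [hst, hρ]; field_simp; ring
      rw [hs2, add_smul, one_smul]
      abel
    rw [hc2]
    exact posSemidef_smul_nonneg hupper hstpos.le
  have hpowBound : ∀ (k : ℕ) (w : Fin d → ℝ),
      euclNorm (((Mf θ) ^ k).mulVec w) ≤ ρ ^ k * euclNorm w := by
    intro k
    induction k with
    | zero => intro w; simp [Matrix.one_mulVec]
    | succ k ih =>
      intro w
      have h1 : ((Mf θ) ^ (k + 1)).mulVec w = ((Mf θ) ^ k).mulVec ((Mf θ).mulVec w) := by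
        rw [pow_succ, ← Matrix.mulVec_mulVec]
      rw [h1]
      calc euclNorm (((Mf θ) ^ k).mulVec ((Mf θ).mulVec w))
          ≤ ρ ^ k * euclNorm ((Mf θ).mulVec w) := ih _
        _ ≤ ρ ^ k * (ρ * euclNorm w) :=
            mul_le_mul_of_nonneg_left (opBound hρnn hMherm psd1 psd2 w) (pow_nonneg hρnn k)
        _ = ρ ^ (k + 1) * euclNorm w := by ring
  -- second operator bound
  set c₂ : ℝ := 1 + (m : ℝ) * st * L with hc₂def
  have hc₂nn : 0 ≤ c₂ := by
    rw [hc₂def]; positivity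
  have hB2herm : B2.IsHermitian := by
    unfold Matrix.IsHermitian
    rw [hB2, conjTranspose_add, conjTranspose_one, conjTranspose_smul, hAherm.eq, star_trivial]
  have psd3 : (c₂ • (1 : Matrix (Fin d) (Fin d) ℝ) - B2).PosSemidef := by
    have hc3 : c₂ • (1 : Matrix (Fin d) (Fin d) ℝ) - B2 = ((m : ℝ) * st) • (L • 1 - A) := by
      rw [hc₂def, hB2, add_smul, one_smul, smul_sub, smul_smul]
      abel
    rw [hc3]
    exact posSemidef_smul_nonneg hupper (by positivity)
  have psd4 : (B2 + c₂ • (1 : Matrix (Fin d) (Fin d) ℝ)).PosSemidef := by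
    have hc4 : B2 + c₂ • (1 : Matrix (Fin d) (Fin d) ℝ)
        = (1 + c₂) • (1 : Matrix (Fin d) (Fin d) ℝ) + ((m : ℝ) * st) • A := by
      rw [hB2]
      module
    rw [hc4]
    exact (posSemidef_smul_nonneg Matrix.PosSemidef.one (by positivity)).add
      (posSemidef_smul_nonneg hApsd (by positivity))
  -- putting it together
  have hρκ : (1 - κ) / (1 + κ) = ρ := by
    rw [hκ, hρ]
    have hLne : L ≠ 0 := ne_of_gt hL
    have hne1 : (1 : ℝ) + ℓ / L ≠ 0 := by positivity
    field_simp
  have hGg : G = euclNorm g := hG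
  have hnormu : euclNorm u ≤ (2 * ((m : ℝ) + 1) - 1) * euclNorm r'
      + (2 * ((m : ℝ) + 1) / (L + ℓ)) * G := by
    calc euclNorm u ≤ euclNorm (B2.mulVec r') + euclNorm ((((m : ℝ) + 1) * st) • g) := by
          rw [hu]; exact euclNorm_sub_le _ _
      _ ≤ c₂ * euclNorm r' + (((m : ℝ) + 1) * st) * G := by
          apply add_le_add
          · exact opBound hc₂nn hB2herm psd3 psd4 r'
          · rw [euclNorm_smul, abs_of_nonneg (by positivity), hGg]
      _ ≤ (2 * ((m : ℝ) + 1) - 1) * euclNorm r' + (2 * ((m : ℝ) + 1) / (L + ℓ)) * G := by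
          apply add_le_add
          · apply mul_le_mul_of_nonneg_right _ (euclNorm_nonneg r')
            have hstL : st * L ≤ 2 := by
              rw [hst, div_mul_eq_mul_div, div_le_iff₀ hLl]
              linarith
            have hmnn : (0:ℝ) ≤ (m : ℝ) := Nat.cast_nonneg m
            rw [hc₂def]
            nlinarith
          · apply le_of_eq
            rw [hst]
            ring
  have hfinal : euclNorm (N.mulVec u) ≤ ρ ^ m * ((2 * ((m : ℝ) + 1) - 1) * euclNorm r'
      + (2 * ((m : ℝ) + 1) / (L + ℓ)) * G) := by
    calc euclNorm (N.mulVec u) ≤ ρ ^ m * euclNorm u := hpowBound m u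
      _ ≤ _ := mul_le_mul_of_nonneg_left hnormu (pow_nonneg hρnn m)
  have hms : m + 1 - 1 = m := by omega
  rw [hρκ, hms]
  have hcast : ((m + 1 : ℕ) : ℝ) = (m : ℝ) + 1 := by push_cast; ring
  rw [hcast]
  exact hfinal
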